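/- Let u be a nonprincipal ultrafilter on ℕ and let each (X_n, B_n, μ_n) be an atomless standard Borel probability space (for instance [0,1] with Lebesgue measure). Then in the Loeb measure space (X_u, B_u, μ_u) there exists a family {B_t}_{t∈T} of sets in B_u, indexed by a set T of cardinality the continuum, such that the B_t are mutually independent and each has measure 1/2: for any finitely many distinct indices t_1, …, t_m in T, μ_u(B_{t_1} ∩ … ∩ B_{t_m}) = 2^{−m}. -/

import Mathlib

open MeasureTheory Filter Topology
open scoped ENNReal symmDiff



/-! Ultraproducts of sets and the Loeb outer measure. -/

/-- The equivalence relation on `∀ n, X n` identifying sequences that agree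
`u`-almost everywhere. -/
def uRel (u : Ultrafilter ℕ) {X : ℕ → Type*} (x y : ∀ n, X n) : Prop :=
  ∀ᶠ n in (u : Filter ℕ), x n = y n

/-- The (set-theoretic) ultraproduct of the family `X n` with respect to the
ultrafilter `u`: the quotient of `∀ n, X n` by the relation identifying sequences
which agree `u`-almost everywhere. -/
def UProd (u : Ultrafilter ℕ) (X : ℕ → Type*) : Type _ :=
  Quot (uRel u (X := X))

/-- The class `[x_n]_u` of a sequence in the ultraproduct. -/
def uMk (u : Ultrafilter ℕ) {X : ℕ → Type*} (x : ∀ n, X n) : UProd u X :=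
  Quot.mk _ x

/-- The subset `[A_n]_u` of the ultraproduct determined by a sequence of subsets
`A n ⊆ X n`: the set of classes of sequences which belong to `A n` for `u`-almost
every `n`. -/
def uSet (u : Ultrafilter ℕ) {X : ℕ → Type*} (A : ∀ n, Set (X n)) : Set (UProd u X) :=
  {z | ∃ x : ∀ n, X n, uMk u x = z ∧ ∀ᶠ n in (u : Filter ℕ), x n ∈ A n}

/-- The limit of a sequence of extended nonnegative reals along the ultrafilter `u`
(it always exists since `ℝ≥0∞` is a compact Hausdorff space). -/
noncomputable def ulim (u : Ultrafilter ℕ) (f : ℕ → ℝ≥0∞) : ℝ≥0∞ :=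
  (u.map f).lim

/-- The Loeb outer measure `θ` on the ultraproduct: the infimum, over countable
covers of `A` by sets of the form `[B^i_n]_u` with all `B^i_n` measurable, of
`∑ᵢ lim_u μ_n (B^i_n)`. -/
noncomputable def loebOuter (u : Ultrafilter ℕ) {X : ℕ → Type*}
    [∀ n, MeasurableSpace (X n)] (μ : ∀ n, Measure (X n)) (A : Set (UProd u X)) : ℝ≥0∞ :=
  ⨅ (B : ℕ → ∀ n, Set (X n)) (_ : (∀ i n, MeasurableSet (B i n)) ∧
      A ⊆ ⋃ i, uSet u (B i)), ∑' i, ulim u fun n => μ n (B i n)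

/-- Carathéodory measurability with respect to the Loeb outer measure. -/
def LoebMeasurable (u : Ultrafilter ℕ) {X : ℕ → Type*}
    [∀ n, MeasurableSpace (X n)] (μ : ∀ n, Measure (X n)) (A : Set (UProd u X)) : Prop :=
  ∀ S : Set (UProd u X), loebOuter u μ (S ∩ A) + loebOuter u μ (S \ A) ≤ loebOuter u μ S

/-- The map on the ultraproduct induced by a sequence of maps `g n : X n → X n`. -/
def uMap (u : Ultrafilter ℕ) {X : ℕ → Type*} (g : ∀ n, X n → X n) :
    UProd u X → UProd u X :=
  Quot.lift (fun x => uMk u fun n => g n (x n))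
    (fun x y h => Quot.sound (h.mono fun n hn => by simpa using congrArg (g n) hn))

/-! ### ulim lemmas -/

theorem ulim_tendsto (u : Ultrafilter ℕ) (f : ℕ → ℝ≥0∞) :
    Tendsto f (u : Filter ℕ) (𝓝 (ulim u f)) := by
  have := (u.map f).le_nhds_lim
  rwa [Ultrafilter.coe_map] at this

theorem ulim_eq {u : Ultrafilter ℕ} {f : ℕ → ℝ≥0∞} {a : ℝ≥0∞}
    (h : Tendsto f (u : Filter ℕ) (𝓝 a)) : ulim u f = a :=
  tendsto_nhds_unique (ulim_tendsto u f) h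

theorem ulim_const {u : Ultrafilter ℕ} {c : ℝ≥0∞} : ulim u (fun _ => c) = c :=
  ulim_eq tendsto_const_nhds

theorem ulim_congr {u : Ultrafilter ℕ} {f g : ℕ → ℝ≥0∞}
    (h : ∀ᶠ n in (u : Filter ℕ), f n = g n) : ulim u f = ulim u g :=
  ulim_eq ((ulim_tendsto u g).congr' (h.mono fun _ e => e.symm))

theorem ulim_le {u : Ultrafilter ℕ} {f g : ℕ → ℝ≥0∞}
    (h : ∀ᶠ n in (u : Filter ℕ), f n ≤ g n) : ulim u f ≤ ulim u g :=
  le_of_tendsto_of_tendsto (ulim_tendsto u f) (ulim_tendsto u g) h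

theorem ulim_le_const {u : Ultrafilter ℕ} {f : ℕ → ℝ≥0∞} {c : ℝ≥0∞}
    (h : ∀ n, f n ≤ c) : ulim u f ≤ c := by
  have := ulim_le (u := u) (g := fun _ => c) (Eventually.of_forall h)
  rwa [ulim_const] at this

theorem ulim_add {u : Ultrafilter ℕ} {f g : ℕ → ℝ≥0∞} :
    ulim u (fun n => f n + g n) = ulim u f + ulim u g :=
  ulim_eq ((ulim_tendsto u f).add (ulim_tendsto u g))

theorem ulim_finset_sum {u : Ultrafilter ℕ} {ι : Type*} (t : Finset ι) (f : ι → ℕ → ℝ≥0∞) :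
    ulim u (fun n => ∑ i ∈ t, f i n) = ∑ i ∈ t, ulim u (f i) := by
  classical
  induction t using Finset.induction_on with
  | empty => simpa using ulim_const
  | insert _ _ hx ih =>
    rename_i a s
    rw [Finset.sum_insert hx]
    calc ulim u (fun n => ∑ i ∈ insert a s, f i n)
        = ulim u (fun n => f a n + ∑ i ∈ s, f i n) :=
          ulim_congr (Eventually.of_forall fun n => by rw [Finset.sum_insert hx])
      _ = ulim u (f a) + ulim u (fun n => ∑ i ∈ s, f i n) := ulim_add
      _ = ulim u (f a) + ∑ i ∈ s, ulim u (f i) := by rw [ih]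

/-! ### uSet lemmas -/

theorem uRel_equivalence (u : Ultrafilter ℕ) {X : ℕ → Type*} :
    Equivalence (uRel u (X := X)) :=
  ⟨fun _ => Eventually.of_forall fun _ => rfl,
   fun h => h.mono fun _ e => e.symm,
   fun h h' => (h.and h').mono fun _ ⟨e, e'⟩ => e.trans e'⟩

theorem uMk_eq_iff {u : Ultrafilter ℕ} {X : ℕ → Type*} {x y : ∀ n, X n} :
    uMk u x = uMk u y ↔ uRel u x y := by
  constructor
  · intro h
    exact ((uRel_equivalence u).eqvGen_iff).mp (Quot.eq.mp h)
  · exact Quot.sound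

theorem mem_uSet_mk {u : Ultrafilter ℕ} {X : ℕ → Type*} {x : ∀ n, X n} {A : ∀ n, Set (X n)} :
    uMk u x ∈ uSet u A ↔ ∀ᶠ n in (u : Filter ℕ), x n ∈ A n := by
  constructor
  · rintro ⟨y, hy, hmem⟩
    have : uRel u y x := uMk_eq_iff.mp hy
    exact (this.and hmem).mono fun n ⟨e, hn⟩ => e ▸ hn
  · intro h
    exact ⟨x, rfl, h⟩

theorem uSet_inter {u : Ultrafilter ℕ} {X : ℕ → Type*} (A A' : ∀ n, Set (X n)) :
    uSet u A ∩ uSet u A' = uSet u (fun n => A n ∩ A' n) := by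
  ext z
  constructor
  · rintro ⟨⟨x, hx, hA⟩, ⟨y, hy, hA'⟩⟩
    have hxy : uRel u x y := uMk_eq_iff.mp (hx.trans hy.symm)
    refine ⟨x, hx, ?_⟩
    exact ((hxy.and hA).and hA').mono fun n ⟨⟨e, h1⟩, h2⟩ => ⟨h1, e ▸ h2⟩
  · rintro ⟨x, hx, h⟩
    exact ⟨⟨x, hx, h.mono fun n hn => hn.1⟩, ⟨x, hx, h.mono fun n hn => hn.2⟩⟩

theorem uSet_biInter {u : Ultrafilter ℕ} {X : ℕ → Type*} {ι : Type*} (s : Finset ι)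
    (hs : s.Nonempty) (A : ι → ∀ n, Set (X n)) :
    (⋂ t ∈ s, uSet u (A t)) = uSet u (fun n => ⋂ t ∈ s, A t n) := by
  classical
  induction hs using Finset.Nonempty.cons_induction with
  | singleton a =>
    have h1 : (fun n => ⋂ t ∈ ({a} : Finset ι), A t n) = A a := by
      funext n; simp
    have h2 : (⋂ t ∈ ({a} : Finset ι), uSet u (A t)) = uSet u (A a) := by simp
    rw [h1, h2]
  | cons a s ha hs ih =>
    rw [Finset.cons_eq_insert]
    have h1 : (fun n => ⋂ t ∈ insert a s, A t n)
        = fun n => A a n ∩ ⋂ t ∈ s, A t n := by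
      funext n; simp [Finset.set_biInter_insert]
    rw [h1, Finset.set_biInter_insert, ih, uSet_inter]

/-! ### loebOuter lemmas -/

section Loeb

variable (u : Ultrafilter ℕ) {X : ℕ → Type*} [∀ n, MeasurableSpace (X n)]
  (μ : ∀ n, Measure (X n)) [∀ n, IsProbabilityMeasure (μ n)]

theorem loebOuter_uSet_le {A : ∀ n, Set (X n)} (hA : ∀ n, MeasurableSet (A n)) :
    loebOuter u μ (uSet u A) ≤ ulim u fun n => μ n (A n) := by
  classical
  set B : ℕ → ∀ n, Set (X n) := fun i => if i = 0 then A else fun _ => ∅ with hBdef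
  have hmeas : ∀ i n, MeasurableSet (B i n) := by
    intro i n; by_cases h : i = 0 <;> simp [hBdef, h, hA n]
  have hcov : uSet u A ⊆ ⋃ i, uSet u (B i) := fun z hz =>
    Set.mem_iUnion.mpr ⟨0, by simpa [hBdef] using hz⟩
  refine le_trans (iInf₂_le B ⟨hmeas, hcov⟩) ?_
  rw [tsum_eq_single 0]
  · simp [hBdef]
  · intro i hi
    have h0 : (fun n => μ n (B i n)) = fun _ => (0 : ℝ≥0∞) := by
      funext n; simp [hBdef, hi]
    rw [h0]; exact ulim_const

theorem ulim_le_tsum_of_cover (hu : (u : Filter ℕ) ≤ Filter.cofinite)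
    (A : ∀ n, Set (X n)) (B : ℕ → ∀ n, Set (X n))
    (hcov : uSet u A ⊆ ⋃ i, uSet u (B i)) :
    ulim u (fun n => μ n (A n)) ≤ ∑' i, ulim u fun n => μ n (B i n) := by
  classical
  haveI hne : ∀ n, Nonempty (X n) := fun n =>
    Set.nonempty_iff_univ_nonempty.mpr (nonempty_of_measure_ne_zero
      (by simp : μ n Set.univ ≠ 0))
  by_contra hcon
  push_neg at hcon
  set L := ulim u (fun n => μ n (A n)) with hLdef
  set R := ∑' i, ulim u fun n => μ n (B i n) with hRdef
  have hL1 : L ≤ 1 := ulim_le_const fun n => prob_le_one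
  set D : ℕ → ∀ n, Set (X n) := fun k n => A n \ ⋃ i ∈ Finset.range k, B i n with hDdef
  have hDanti : ∀ {k l : ℕ}, k ≤ l → ∀ n, D l n ⊆ D k n := by
    intro k l hkl n
    apply Set.diff_subset_diff_right
    refine Set.iUnion₂_subset fun i hi => ?_
    exact Set.subset_iUnion₂ (s := fun i (_ : i ∈ Finset.range l) => B i n) i
      (Finset.mem_range.mpr (lt_of_lt_of_le (Finset.mem_range.mp hi) hkl))
  have hstep : ∀ k, L ≤ ulim u (fun n => μ n (D k n)) + R := by
    intro k
    have hpoint : ∀ n, μ n (A n) ≤ μ n (D k n) + ∑ i ∈ Finset.range k, μ n (B i n) := by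
      intro n
      have hsub : A n ⊆ D k n ∪ ⋃ i ∈ Finset.range k, B i n := fun y hy => by
        by_cases h : y ∈ ⋃ i ∈ Finset.range k, B i n
        · exact Or.inr h
        · exact Or.inl ⟨hy, h⟩
      calc μ n (A n) ≤ μ n (D k n ∪ ⋃ i ∈ Finset.range k, B i n) := measure_mono hsub
        _ ≤ μ n (D k n) + μ n (⋃ i ∈ Finset.range k, B i n) := measure_union_le _ _
        _ ≤ μ n (D k n) + ∑ i ∈ Finset.range k, μ n (B i n) := by
            gcongr
            exact measure_biUnion_finset_le _ _
    calc L ≤ ulim u (fun n => μ n (D k n) + ∑ i ∈ Finset.range k, μ n (B i n)) :=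
          ulim_le (Filter.Eventually.of_forall hpoint)
      _ = ulim u (fun n => μ n (D k n)) +
            ulim u (fun n => ∑ i ∈ Finset.range k, μ n (B i n)) := ulim_add
      _ = ulim u (fun n => μ n (D k n)) +
            ∑ i ∈ Finset.range k, ulim u (fun n => μ n (B i n)) := by
            rw [ulim_finset_sum]
      _ ≤ ulim u (fun n => μ n (D k n)) + R := by
            gcongr
            exact ENNReal.sum_le_tsum _
  have hδpos : 0 < L - R := tsub_pos_iff_lt.mpr hcon
  have hδtop : L - R ≠ ⊤ := (le_trans tsub_le_self hL1).trans_lt ENNReal.one_lt_top |>.ne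
  set ε := (L - R) / 2 with hεdef
  have hεpos : 0 < ε := ENNReal.half_pos hδpos.ne'
  have hεlt : ε < L - R := ENNReal.half_lt_self hδpos.ne' hδtop
  have hδle : ∀ k, L - R ≤ ulim u (fun n => μ n (D k n)) := fun k =>
    tsub_le_iff_right.mpr (hstep k)
  set S : ℕ → Set ℕ := fun k => {n | ε < μ n (D k n)} with hSdef
  have hSmem : ∀ k, S k ∈ u := by
    intro k
    by_contra h
    have hc : (S k)ᶜ ∈ u := Ultrafilter.compl_mem_iff_notMem.mpr h
    have : ulim u (fun n => μ n (D k n)) ≤ ε := by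
      refine le_trans (ulim_le (f := fun n => μ n (D k n)) (g := fun _ => ε) ?_) ?_
      · exact Filter.mem_of_superset hc fun n hn => le_of_not_gt (by simpa [hSdef] using hn)
      · rw [ulim_const]
    exact absurd ((hδle k).trans this) (not_le.mpr hεlt)
  have hSanti : ∀ {k l : ℕ}, k ≤ l → S l ⊆ S k := fun {k l} hkl n hn =>
    lt_of_lt_of_le hn (measure_mono (hDanti hkl n))
  set f : ℕ → ℕ := fun n => Nat.findGreatest (fun k => n ∈ S k) n with hfdef
  have hfS : ∀ n, n ∈ S 0 → n ∈ S (f n) := fun n hn =>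
    Nat.findGreatest_spec (P := fun k => n ∈ S k) (Nat.zero_le n) hn
  have hDne : ∀ n, n ∈ S (f n) → (D (f n) n).Nonempty := fun n hn =>
    nonempty_of_measure_ne_zero (lt_of_le_of_lt (zero_le : 0 ≤ ε) hn).ne'
  set x : ∀ n, X n := fun n =>
    if h : (D (f n) n).Nonempty then h.some else Classical.arbitrary _ with hxdef
  have hx : ∀ n, n ∈ S 0 → x n ∈ D (f n) n := by
    intro n hn
    have h := hDne n (hfS n hn)
    simp only [hxdef, dif_pos h]
    exact h.some_mem
  have hxA : ∀ᶠ n in (u : Filter ℕ), x n ∈ A n := by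
    refine Filter.mem_of_superset (hSmem 0) fun n hn => ?_
    exact (hx n hn).1
  obtain ⟨Bi, ⟨i, rfl⟩, hiz⟩ := hcov (mem_uSet_mk.mpr hxA)
  have hBi : ∀ᶠ n in (u : Filter ℕ), x n ∈ B i n := mem_uSet_mk.mp hiz
  have hge : ∀ᶠ n in (u : Filter ℕ), i + 1 ≤ n := by
    refine Filter.Eventually.filter_mono hu ?_
    rw [Nat.cofinite_eq_atTop]
    exact Filter.eventually_atTop.mpr ⟨i + 1, fun n h => h⟩
  have hnotBi : ∀ᶠ n in (u : Filter ℕ), x n ∉ B i n := by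
    have h1 : ∀ᶠ n in (u : Filter ℕ), n ∈ S (i + 1) := hSmem (i + 1)
    have h0 : ∀ᶠ n in (u : Filter ℕ), n ∈ S 0 := hSmem 0
    filter_upwards [h1, h0, hge] with n hn1 hn0 hnge
    have hfge : i + 1 ≤ f n := Nat.le_findGreatest hnge hn1
    have hxn : x n ∈ D (i + 1) n := hDanti hfge n (hx n hn0)
    intro hmem
    exact hxn.2 (Set.mem_biUnion (Finset.self_mem_range_succ i) hmem)
  obtain ⟨n, h1, h2⟩ := (hBi.and hnotBi).exists
  exact h2 h1

theorem loebOuter_uSet (hu : (u : Filter ℕ) ≤ Filter.cofinite)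
    {A : ∀ n, Set (X n)} (hA : ∀ n, MeasurableSet (A n)) :
    loebOuter u μ (uSet u A) = ulim u fun n => μ n (A n) := by
  refine le_antisymm (loebOuter_uSet_le u μ hA) ?_
  refine le_iInf fun B => le_iInf fun hB => ?_
  exact ulim_le_tsum_of_cover u μ hu A B hB.2

theorem loebMeasurable_uSet {A : ∀ n, Set (X n)} (hA : ∀ n, MeasurableSet (A n)) :
    LoebMeasurable u μ (uSet u A) := by
  intro S
  refine le_iInf fun B => le_iInf fun hB => ?_
  have h1 : loebOuter u μ (S ∩ uSet u A) ≤
      ∑' i, ulim u fun n => μ n (B i n ∩ A n) := by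
    refine iInf₂_le (fun i n => B i n ∩ A n) ⟨fun i n => (hB.1 i n).inter (hA n), ?_⟩
    rintro z ⟨hzS, hzA⟩
    obtain ⟨Bi, ⟨i, rfl⟩, hiz⟩ := hB.2 hzS
    refine Set.mem_iUnion.mpr ⟨i, ?_⟩
    rw [← uSet_inter]
    exact ⟨hiz, hzA⟩
  have h2 : loebOuter u μ (S \ uSet u A) ≤
      ∑' i, ulim u fun n => μ n (B i n \ A n) := by
    refine iInf₂_le (fun i n => B i n \ A n) ⟨fun i n => (hB.1 i n).diff (hA n), ?_⟩
    rintro z ⟨hzS, hzA⟩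
    obtain ⟨Bi, ⟨i, rfl⟩, hiz⟩ := hB.2 hzS
    refine Set.mem_iUnion.mpr ⟨i, ?_⟩
    obtain ⟨y, hy, hmemB⟩ := hiz
    refine ⟨y, hy, ?_⟩
    have hnotA : ¬ ∀ᶠ n in (u : Filter ℕ), y n ∈ A n := by
      intro h
      exact hzA (hy ▸ mem_uSet_mk.mpr h)
    have hAc : ∀ᶠ n in (u : Filter ℕ), y n ∉ A n := by
      rwa [Ultrafilter.eventually_not]
    exact hmemB.and hAc
  calc loebOuter u μ (S ∩ uSet u A) + loebOuter u μ (S \ uSet u A)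
      ≤ (∑' i, ulim u fun n => μ n (B i n ∩ A n)) +
        ∑' i, ulim u fun n => μ n (B i n \ A n) := add_le_add h1 h2
    _ = ∑' i, (ulim u (fun n => μ n (B i n ∩ A n)) +
        ulim u (fun n => μ n (B i n \ A n))) := (ENNReal.tsum_add).symm
    _ = ∑' i, ulim u fun n => μ n (B i n) := by
        refine tsum_congr fun i => ?_
        rw [← ulim_add]
        refine ulim_congr (Filter.Eventually.of_forall fun n => ?_)
        exact measure_inter_add_diff (B i n) (hA n)
    _ ≤ ∑' i, ulim u fun n => μ n (B i n) := le_refl _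

end Loeb

/-! ### Halving sets and dyadic independent families -/

section Dyadic

variable {Y : Type*} [MeasurableSpace Y] [StandardBorelSpace Y]
  (ν : Measure Y) [IsProbabilityMeasure ν] [NullSingletonClass ν]

theorem exists_half_subset {S : Set Y} (hS : MeasurableSet S) :
    ∃ T, T ⊆ S ∧ MeasurableSet T ∧ ν T = ν S / 2 := by
  by_cases h0 : ν S = 0
  · exact ⟨∅, Set.empty_subset S, MeasurableSet.empty, by simp [h0]⟩
  obtain ⟨f, hf⟩ := MeasureTheory.exists_measurableEmbedding_real Y
  set νR := Measure.map f (ν.restrict S) with hνR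
  have hIic : ∀ r : ℝ, νR (Set.Iic r) = ν (S ∩ f ⁻¹' Set.Iic r) := by
    intro r
    rw [hνR, Measure.map_apply hf.measurable measurableSet_Iic,
      Measure.restrict_apply (hf.measurable measurableSet_Iic), Set.inter_comm]
  have huniv : νR Set.univ = ν S := by
    rw [hνR, Measure.map_apply hf.measurable MeasurableSet.univ, Set.preimage_univ,
      Measure.restrict_apply_univ]
  have hfin : ∀ s : Set ℝ, νR s ≠ ⊤ := fun s =>
    (lt_of_le_of_lt (measure_mono (Set.subset_univ s))
      (huniv ▸ measure_lt_top ν S)).ne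
  have hatom : ∀ r : ℝ, νR {r} = 0 := by
    intro r
    rw [hνR, Measure.map_apply hf.measurable (measurableSet_singleton r)]
    have hsub : (f ⁻¹' {r}).Subsingleton := fun a ha b hb =>
      hf.injective (by
        simp only [Set.mem_preimage, Set.mem_singleton_iff] at ha hb
        exact ha.trans hb.symm)
    exact le_antisymm (le_trans (Measure.restrict_apply_le _ _)
      (hsub.measure_zero ν).le) zero_le
  set m := ν S / 2 with hm
  have hmpos : 0 < m := ENNReal.half_pos h0
  have hmlt : m < ν S := ENNReal.half_lt_self h0 (measure_ne_top ν S)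
  set Q := {r : ℝ | νR (Set.Iic r) ≤ m} with hQ
  have hIio : ∀ c : ℝ, νR (Set.Iio c) = ⨆ n : ℕ, νR (Set.Iic (c - 1 / (n + 1))) := by
    intro c
    have hmono : Monotone fun n : ℕ => Set.Iic (c - 1 / ((n : ℝ) + 1)) := by
      intro a b hab
      apply Set.Iic_subset_Iic.mpr
      have hc : (a : ℝ) ≤ (b : ℝ) := Nat.cast_le.mpr hab
      have h1 : 1 / ((b : ℝ) + 1) ≤ 1 / ((a : ℝ) + 1) := by
        apply one_div_le_one_div_of_le
        · positivity
        · linarith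
      linarith
    have hU : (⋃ n : ℕ, Set.Iic (c - 1 / ((n : ℝ) + 1))) = Set.Iio c := by
      ext r
      simp only [Set.mem_iUnion, Set.mem_Iic, Set.mem_Iio]
      constructor
      · rintro ⟨n, hn⟩
        have h1 : (0 : ℝ) < 1 / ((n : ℝ) + 1) := by positivity
        linarith
      · intro hr
        obtain ⟨n, hn⟩ := exists_nat_one_div_lt (sub_pos.mpr hr)
        exact ⟨n, by linarith⟩
    rw [← hU, Monotone.measure_iUnion hmono]
  have hIicInf : ∀ c : ℝ, νR (Set.Iic c) = ⨅ n : ℕ, νR (Set.Iic (c + 1 / (n + 1))) := by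
    intro c
    have hanti : Antitone fun n : ℕ => Set.Iic (c + 1 / ((n : ℝ) + 1)) := by
      intro a b hab
      apply Set.Iic_subset_Iic.mpr
      have hc : (a : ℝ) ≤ (b : ℝ) := Nat.cast_le.mpr hab
      have h1 : 1 / ((b : ℝ) + 1) ≤ 1 / ((a : ℝ) + 1) := by
        apply one_div_le_one_div_of_le
        · positivity
        · linarith
      linarith
    have hI : (⋂ n : ℕ, Set.Iic (c + 1 / ((n : ℝ) + 1))) = Set.Iic c := by
      ext r
      simp only [Set.mem_iInter, Set.mem_Iic]
      constructor
      · intro h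
        by_contra hrc
        push_neg at hrc
        obtain ⟨n, hn⟩ := exists_nat_one_div_lt (sub_pos.mpr hrc)
        have := h n
        linarith
      · intro h n
        have h1 : (0 : ℝ) < 1 / ((n : ℝ) + 1) := by positivity
        linarith
    rw [← hI, Antitone.measure_iInter hanti
      (fun n => measurableSet_Iic.nullMeasurableSet) ⟨0, hfin _⟩]
  have hbot : (⨅ n : ℕ, νR (Set.Iic (-(n : ℝ) - 1))) = 0 := by
    have hanti : Antitone fun n : ℕ => Set.Iic (-(n : ℝ) - 1) := by
      intro a b hab
      apply Set.Iic_subset_Iic.mpr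
      have : (a : ℝ) ≤ b := Nat.cast_le.mpr hab
      linarith
    have hI : (⋂ n : ℕ, Set.Iic (-(n : ℝ) - 1)) = ∅ := by
      ext r
      simp only [Set.mem_iInter, Set.mem_Iic, Set.mem_empty_iff_false, iff_false]
      push_neg
      obtain ⟨n, hn⟩ := exists_nat_gt (-r - 1)
      exact ⟨n, by linarith⟩
    rw [← measure_empty (μ := νR), ← hI]
    exact (Antitone.measure_iInter hanti
      (fun n => measurableSet_Iic.nullMeasurableSet) ⟨0, hfin _⟩).symm
  have hQne : Q.Nonempty := by
    by_contra hQe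
    have hall : ∀ n : ℕ, m < νR (Set.Iic (-(n : ℝ) - 1)) := fun n =>
      lt_of_not_ge fun h => hQe ⟨_, h⟩
    have : m ≤ 0 := hbot ▸ le_iInf fun n => (hall n).le
    exact hmpos.not_ge this
  have hQbdd : BddAbove Q := by
    have hsup : (⨆ n : ℕ, νR (Set.Iic ((n : ℝ)))) = ν S := by
      have hmono : Monotone fun n : ℕ => Set.Iic ((n : ℝ)) := fun a b hab =>
        Set.Iic_subset_Iic.mpr (Nat.cast_le.mpr hab)
      have hU : (⋃ n : ℕ, Set.Iic ((n : ℝ))) = Set.univ := by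
        ext r
        simp only [Set.mem_iUnion, Set.mem_Iic, Set.mem_univ, iff_true]
        obtain ⟨n, hn⟩ := exists_nat_gt r
        exact ⟨n, hn.le⟩
      rw [← huniv, ← hU, Monotone.measure_iUnion hmono]
    obtain ⟨n, hn⟩ := lt_iSup_iff.mp (hsup ▸ hmlt)
    refine ⟨(n : ℝ), fun r hr => ?_⟩
    by_contra h
    push_neg at h
    exact absurd (le_trans (measure_mono (Set.Iic_subset_Iic.mpr h.le)) hr)
      (not_le.mpr hn)
  have hle : νR (Set.Iic (sSup Q)) ≤ m := by
    have h1 : νR (Set.Iic (sSup Q)) ≤ νR (Set.Iio (sSup Q)) + νR {sSup Q} := by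
      rw [show Set.Iic (sSup Q) = Set.Iio (sSup Q) ∪ {sSup Q} by
        rw [Set.Iio_union_right]]
      exact measure_union_le _ _
    rw [hatom, add_zero] at h1
    refine h1.trans ?_
    rw [hIio]
    refine iSup_le fun n => ?_
    have hlt : sSup Q - 1 / ((n : ℝ) + 1) < sSup Q := by
      have h1 : (0 : ℝ) < 1 / ((n : ℝ) + 1) := by positivity
      linarith
    obtain ⟨q, hqQ, hq⟩ := exists_lt_of_lt_csSup hQne hlt
    exact le_trans (measure_mono (Set.Iic_subset_Iic.mpr hq.le)) hqQ
  have hge : m ≤ νR (Set.Iic (sSup Q)) := by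
    rw [hIicInf]
    refine le_iInf fun n => ?_
    have hnot : sSup Q + 1 / ((n : ℝ) + 1) ∉ Q := by
      intro hmem
      have h1 : (0 : ℝ) < 1 / ((n : ℝ) + 1) := by positivity
      exact absurd (le_csSup hQbdd hmem) (by linarith)
    exact (not_le.mp hnot).le
  refine ⟨S ∩ f ⁻¹' Set.Iic (sSup Q), Set.inter_subset_left,
    hS.inter (hf.measurable measurableSet_Iic), ?_⟩
  rw [← hIic]
  exact le_antisymm hle hge

open Classical in
/-- A measurable subset of `S` of half the measure. -/
noncomputable def halfSet (S : Set Y) : Set Y :=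
  if h : MeasurableSet S then (exists_half_subset ν h).choose else ∅

theorem halfSet_subset (S : Set Y) : halfSet ν S ⊆ S := by
  classical
  rw [halfSet]
  split_ifs with h
  · exact (exists_half_subset ν h).choose_spec.1
  · exact Set.empty_subset S

theorem measurableSet_halfSet {S : Set Y} (hS : MeasurableSet S) :
    MeasurableSet (halfSet ν S) := by
  classical
  rw [halfSet, dif_pos hS]
  exact (exists_half_subset ν hS).choose_spec.2.1

theorem measure_halfSet {S : Set Y} (hS : MeasurableSet S) :
    ν (halfSet ν S) = ν S / 2 := by
  classical
  rw [halfSet, dif_pos hS]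
  exact (exists_half_subset ν hS).choose_spec.2.2

/-- The dyadic cells: level-`k` cells indexed by `Bool`-sequences (only the first `k`
values matter). -/
noncomputable def dyadicCell : ℕ → (ℕ → Bool) → Set Y
  | 0, _ => Set.univ
  | k + 1, b =>
    if b k then halfSet ν (dyadicCell k b)
    else dyadicCell k b \ halfSet ν (dyadicCell k b)

theorem measurableSet_dyadicCell : ∀ (k : ℕ) (b : ℕ → Bool),
    MeasurableSet (dyadicCell ν k b)
  | 0, _ => MeasurableSet.univ
  | k + 1, b => by
    rw [dyadicCell]
    have ih := measurableSet_dyadicCell k b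
    split_ifs
    · exact measurableSet_halfSet ν ih
    · exact ih.diff (measurableSet_halfSet ν ih)

theorem half_pow (k : ℕ) : ((1:ℝ≥0∞)/2) ^ k / 2 = ((1:ℝ≥0∞)/2) ^ (k + 1) := by
  rw [pow_succ, div_eq_mul_inv, one_div]

theorem measure_dyadicCell : ∀ (k : ℕ) (b : ℕ → Bool),
    ν (dyadicCell ν k b) = ((1:ℝ≥0∞)/2) ^ k
  | 0, _ => by rw [dyadicCell]; simp
  | k + 1, b => by
    rw [dyadicCell]
    have ihm := measurableSet_dyadicCell ν k b
    have ih := measure_dyadicCell k b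
    split_ifs
    · rw [measure_halfSet ν ihm, ih, half_pow]
    · rw [measure_diff (halfSet_subset ν _) (measurableSet_halfSet ν ihm).nullMeasurableSet
        (measure_ne_top ν _),
        measure_halfSet ν ihm, ih, ENNReal.sub_half (by
          rw [← ih]; exact (measure_ne_top ν _)), half_pow]

theorem dyadicCell_congr : ∀ (k : ℕ) (b b' : ℕ → Bool),
    (∀ i, i < k → b i = b' i) → dyadicCell ν k b = dyadicCell ν k b'
  | 0, _, _, _ => rfl
  | k + 1, b, b', h => by
    have ih := dyadicCell_congr k b b' (fun i hi => h i (Nat.lt_succ_of_lt hi))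
    rw [dyadicCell, dyadicCell, h k (Nat.lt_succ_self k), ih]

theorem dyadicCell_succ_subset (k : ℕ) (b : ℕ → Bool) :
    dyadicCell ν (k + 1) b ⊆ dyadicCell ν k b := by
  rw [dyadicCell]
  split_ifs
  · exact halfSet_subset ν _
  · exact Set.diff_subset

theorem dyadicCell_subset_of_le {k l : ℕ} (h : k ≤ l) (b : ℕ → Bool) :
    dyadicCell ν l b ⊆ dyadicCell ν k b := by
  induction l with
  | zero => rw [Nat.le_zero.mp h]
  | succ l ih =>
    rcases Nat.lt_or_ge k (l + 1) with h' | h'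
    · exact (dyadicCell_succ_subset ν l b).trans (ih (Nat.lt_succ_iff.mp h'))
    · rw [le_antisymm h h']

theorem dyadicCell_disjoint : ∀ (k : ℕ) (b b' : ℕ → Bool),
    (∃ i, i < k ∧ b i ≠ b' i) → dyadicCell ν k b ∩ dyadicCell ν k b' = ∅
  | 0, _, _, ⟨i, hi, _⟩ => absurd hi (Nat.not_lt_zero i)
  | k + 1, b, b', ⟨i, hi, hne⟩ => by
    by_cases hall : ∀ j, j < k → b j = b' j
    · have hik : i = k := by
        rcases Nat.lt_succ_iff_lt_or_eq.mp hi with h | h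
        · exact absurd (hall i h) hne
        · exact h
      subst hik
      have hcc : dyadicCell ν i b = dyadicCell ν i b' := dyadicCell_congr ν i b b' hall
      rw [dyadicCell, dyadicCell, ← hcc]
      cases hb : b i <;> cases hb' : b' i
      · exact absurd (hb.trans hb'.symm) hne
      · simp [hb, hb', Set.diff_inter_self, Set.inter_diff_self]
      · simp [hb, hb', Set.diff_inter_self, Set.inter_diff_self]
      · exact absurd (hb.trans hb'.symm) hne
    · push_neg at hall
      obtain ⟨j, hj, hjne⟩ := hall
      have ih := dyadicCell_disjoint k b b' ⟨j, hj, hjne⟩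
      apply Set.eq_empty_of_subset_empty
      calc dyadicCell ν (k+1) b ∩ dyadicCell ν (k+1) b'
          ⊆ dyadicCell ν k b ∩ dyadicCell ν k b' :=
            Set.inter_subset_inter (dyadicCell_succ_subset ν k b)
              (dyadicCell_succ_subset ν k b')
        _ = ∅ := ih

end Dyadic

section Dyadic2

variable {Y : Type*} [MeasurableSpace Y] [StandardBorelSpace Y]
  (ν : Measure Y) [IsProbabilityMeasure ν] [NullSingletonClass ν]

/-- Extend a finite Boolean pattern by `false`. -/
def extB {k : ℕ} (c : Fin k → Bool) : ℕ → Bool := fun i =>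
  if h : i < k then c ⟨i, h⟩ else false

theorem extB_lt {k : ℕ} (c : Fin k → Bool) {i : ℕ} (h : i < k) :
    extB c i = c ⟨i, h⟩ := dif_pos h

theorem iUnion_dyadicCell : ∀ k : ℕ,
    (⋃ c : Fin k → Bool, dyadicCell ν k (extB c)) = Set.univ
  | 0 => by
    apply Set.eq_univ_of_forall
    intro y
    exact Set.mem_iUnion.mpr ⟨fun _ => false, by rw [dyadicCell]; trivial⟩
  | k + 1 => by
    apply Set.eq_univ_of_forall
    intro y
    have hy : y ∈ ⋃ c : Fin k → Bool, dyadicCell ν k (extB c) := by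
      rw [iUnion_dyadicCell k]; trivial
    obtain ⟨c, hyc⟩ := Set.mem_iUnion.mp hy
    have hagree : ∀ v : Bool, ∀ i, i < k →
        extB (Fin.snoc c v : Fin (k+1) → Bool) i = extB c i := by
      intro v i hi
      rw [extB_lt _ (Nat.lt_succ_of_lt hi), extB_lt c hi]
      have h1 : (⟨i, Nat.lt_succ_of_lt hi⟩ : Fin (k+1)) = Fin.castSucc ⟨i, hi⟩ := rfl
      rw [h1, Fin.snoc_castSucc]
    have hcell : ∀ v : Bool, dyadicCell ν k (extB (Fin.snoc c v : Fin (k+1) → Bool))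
        = dyadicCell ν k (extB c) := fun v =>
      dyadicCell_congr ν k _ _ (hagree v)
    have hlast : ∀ v : Bool, extB (Fin.snoc c v : Fin (k+1) → Bool) k = v := by
      intro v
      rw [extB_lt _ (Nat.lt_succ_self k)]
      have h1 : (⟨k, Nat.lt_succ_self k⟩ : Fin (k+1)) = Fin.last k := rfl
      rw [h1, Fin.snoc_last]
    by_cases hh : y ∈ halfSet ν (dyadicCell ν k (extB c))
    · refine Set.mem_iUnion.mpr ⟨Fin.snoc c true, ?_⟩
      rw [dyadicCell, hlast true, if_pos rfl, hcell true]
      exact hh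
    · refine Set.mem_iUnion.mpr ⟨Fin.snoc c false, ?_⟩
      rw [dyadicCell, hlast false, if_neg (by simp), hcell false]
      exact ⟨hyc, hh⟩

/-- The `i`-th independent set: union of the level-`(i+1)` cells whose last label
is `true`. -/
noncomputable def indepSet (i : ℕ) : Set Y :=
  ⋃ (c : Fin (i+1) → Bool) (_ : c (Fin.last i) = true), dyadicCell ν (i+1) (extB c)

theorem measurableSet_indepSet (i : ℕ) : MeasurableSet (indepSet ν i) :=
  MeasurableSet.iUnion fun _ => MeasurableSet.iUnion fun _ =>
    measurableSet_dyadicCell ν _ _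

theorem dyadicCell_subset_indepSet {i k : ℕ} (hik : i < k) (b : ℕ → Bool)
    (hb : b i = true) : dyadicCell ν k b ⊆ indepSet ν i := by
  have h1 : dyadicCell ν k b ⊆ dyadicCell ν (i+1) b :=
    dyadicCell_subset_of_le ν hik b
  refine h1.trans ?_
  set c : Fin (i+1) → Bool := fun j => b j with hc
  have hcell : dyadicCell ν (i+1) b = dyadicCell ν (i+1) (extB c) :=
    dyadicCell_congr ν _ _ _ (fun j hj => (extB_lt c hj).symm)
  rw [hcell]
  exact Set.subset_iUnion₂ (s := fun c _ => dyadicCell ν (i+1) (extB c)) c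
    (show c (Fin.last i) = true from hb)

theorem dyadicCell_disjoint_indepSet {i k : ℕ} (hik : i < k) (b : ℕ → Bool)
    (hb : b i = false) : dyadicCell ν k b ∩ indepSet ν i = ∅ := by
  apply Set.eq_empty_of_subset_empty
  rw [indepSet, Set.inter_iUnion₂]
  refine Set.iUnion₂_subset fun c hc => ?_
  have h1 : dyadicCell ν k b ⊆ dyadicCell ν (i+1) b :=
    dyadicCell_subset_of_le ν hik b
  have h2 : dyadicCell ν (i+1) b ∩ dyadicCell ν (i+1) (extB c) = ∅ := by
    apply dyadicCell_disjoint
    refine ⟨i, Nat.lt_succ_self i, ?_⟩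
    rw [hb, extB_lt c (Nat.lt_succ_self i)]
    have h3 : (⟨i, Nat.lt_succ_self i⟩ : Fin (i+1)) = Fin.last i := rfl
    rw [h3, hc]
    simp
  calc dyadicCell ν k b ∩ dyadicCell ν (i+1) (extB c)
      ⊆ dyadicCell ν (i+1) b ∩ dyadicCell ν (i+1) (extB c) :=
        Set.inter_subset_inter_left _ h1
    _ = ∅ := h2
    _ ⊆ ∅ := subset_rfl

theorem indepSet_inter_dyadicCell (i : ℕ) (b : ℕ → Bool) :
    indepSet ν i ∩ dyadicCell ν i b = halfSet ν (dyadicCell ν i b) := by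
  apply Set.Subset.antisymm
  · rw [indepSet, Set.iUnion₂_inter]
    refine Set.iUnion₂_subset fun c hc => ?_
    by_cases hagree : ∀ j, j < i → extB c j = b j
    · have hcell : dyadicCell ν i (extB c) = dyadicCell ν i b :=
        dyadicCell_congr ν i _ _ hagree
      have hhalf : dyadicCell ν (i+1) (extB c) = halfSet ν (dyadicCell ν i b) := by
        rw [dyadicCell, show extB c i = true from (by
          rw [extB_lt c (Nat.lt_succ_self i)]
          have h3 : (⟨i, Nat.lt_succ_self i⟩ : Fin (i+1)) = Fin.last i := rfl
          rw [h3]; exact hc), if_pos rfl, hcell]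
      rw [hhalf]
      exact Set.inter_subset_left
    · push_neg at hagree
      obtain ⟨j, hj, hjne⟩ := hagree
      have hdis : dyadicCell ν i (extB c) ∩ dyadicCell ν i b = ∅ :=
        dyadicCell_disjoint ν i _ _ ⟨j, hj, hjne⟩
      refine le_trans ?_ (Set.empty_subset _)
      calc dyadicCell ν (i+1) (extB c) ∩ dyadicCell ν i b
          ⊆ dyadicCell ν i (extB c) ∩ dyadicCell ν i b :=
            Set.inter_subset_inter_left _ (dyadicCell_succ_subset ν i _)
        _ = ∅ := hdis
  · refine Set.subset_inter ?_ (halfSet_subset ν _)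
    classical
    set b' : ℕ → Bool := fun j => if j = i then true else b j with hb'
    have hcell : dyadicCell ν i b' = dyadicCell ν i b :=
      dyadicCell_congr ν i _ _ (fun j hj => if_neg (Nat.ne_of_lt hj))
    have hkey : halfSet ν (dyadicCell ν i b) = dyadicCell ν (i+1) b' := by
      rw [dyadicCell, show b' i = true from if_pos rfl, if_pos rfl, hcell]
    rw [hkey]
    exact dyadicCell_subset_indepSet ν (Nat.lt_succ_self i) b' (if_pos rfl)

theorem measure_eq_sum_dyadicCell (k : ℕ) (T : Set Y) (hT : MeasurableSet T) :
    ν T = ∑ c : Fin k → Bool, ν (T ∩ dyadicCell ν k (extB c)) := by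
  classical
  have hdisj : Pairwise (Function.onFun Disjoint fun c : Fin k → Bool =>
      T ∩ dyadicCell ν k (extB c)) := by
    intro c c' hcc
    have hne : ∃ i, i < k ∧ extB c i ≠ extB c' i := by
      by_contra hnone
      push_neg at hnone
      apply hcc
      funext j
      have h := hnone j j.isLt
      rwa [extB_lt c j.isLt, extB_lt c' j.isLt] at h
    have hd := dyadicCell_disjoint ν k _ _ hne
    refine Set.disjoint_iff_inter_eq_empty.mpr ?_
    apply Set.eq_empty_of_subset_empty
    calc (T ∩ dyadicCell ν k (extB c)) ∩ (T ∩ dyadicCell ν k (extB c'))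
        ⊆ dyadicCell ν k (extB c) ∩ dyadicCell ν k (extB c') :=
          Set.inter_subset_inter Set.inter_subset_right Set.inter_subset_right
      _ = ∅ := hd
  have hmeas : ∀ c : Fin k → Bool, MeasurableSet (T ∩ dyadicCell ν k (extB c)) :=
    fun c => hT.inter (measurableSet_dyadicCell ν k _)
  have hcover : (⋃ c : Fin k → Bool, T ∩ dyadicCell ν k (extB c)) = T := by
    rw [← Set.inter_iUnion, iUnion_dyadicCell, Set.inter_univ]
  conv_lhs => rw [← hcover]
  rw [measure_iUnion hdisj hmeas, tsum_fintype]

theorem measure_biInter_indepSet (s : Finset ℕ) :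
    ν (⋂ i ∈ s, indepSet ν i) = ((1:ℝ≥0∞)/2) ^ s.card := by
  classical
  induction s using Finset.induction_on_max with
  | empty => simp
  | insert a s ha ih =>
    have haS : a ∉ s := fun hmem => lt_irrefl a (ha a hmem)
    set T := ⋂ i ∈ s, indepSet ν i with hTdef
    have hTmeas : MeasurableSet T :=
      MeasurableSet.biInter (Finset.countable_toSet s)
        fun i _ => measurableSet_indepSet ν i
    have key : ∀ c : Fin a → Bool,
        ν ((indepSet ν a ∩ T) ∩ dyadicCell ν a (extB c)) =
          (if ∀ i ∈ s, extB c i = true then ((1:ℝ≥0∞)/2)^(a+1) else 0) ∧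
        ν (T ∩ dyadicCell ν a (extB c)) =
          (if ∀ i ∈ s, extB c i = true then ((1:ℝ≥0∞)/2)^a else 0) := by
      intro c
      by_cases hcond : ∀ i ∈ s, extB c i = true
      · have hsubT : dyadicCell ν a (extB c) ⊆ T :=
          Set.subset_iInter₂ fun i hi =>
            dyadicCell_subset_indepSet ν (ha i hi) _ (hcond i hi)
        have hTinter : T ∩ dyadicCell ν a (extB c) = dyadicCell ν a (extB c) :=
          Set.inter_eq_right.mpr hsubT
        constructor
        · rw [if_pos hcond]
          have heq : (indepSet ν a ∩ T) ∩ dyadicCell ν a (extB c)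
              = indepSet ν a ∩ dyadicCell ν a (extB c) := by
            rw [Set.inter_assoc, hTinter]
          rw [heq, indepSet_inter_dyadicCell,
            measure_halfSet ν (measurableSet_dyadicCell ν _ _),
            measure_dyadicCell, half_pow]
        · rw [if_pos hcond, hTinter, measure_dyadicCell]
      · rw [if_neg hcond, if_neg hcond]
        push_neg at hcond
        obtain ⟨i, hi, hne⟩ := hcond
        have hfalse : extB c i = false := by
          cases h : extB c i
          · rfl
          · exact absurd h hne
        have hdis : dyadicCell ν a (extB c) ∩ indepSet ν i = ∅ :=
          dyadicCell_disjoint_indepSet ν (ha i hi) _ hfalse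
        have hzero : ν (T ∩ dyadicCell ν a (extB c)) = 0 := by
          refine measure_mono_null ?_ measure_empty
          intro y hy
          rw [← hdis]
          exact ⟨hy.2, Set.mem_iInter₂.mp hy.1 i hi⟩
        constructor
        · refine measure_mono_null ?_ hzero
          exact Set.inter_subset_inter_left _ Set.inter_subset_right
        · exact hzero
    have hsum1 : ν (indepSet ν a ∩ T) = ∑ c : Fin a → Bool,
        (if ∀ i ∈ s, extB c i = true then ((1:ℝ≥0∞)/2)^(a+1) else 0) := by
      rw [measure_eq_sum_dyadicCell ν a _ ((measurableSet_indepSet ν a).inter hTmeas)]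
      exact Finset.sum_congr rfl fun c _ => (key c).1
    have hsum2 : ν T = ∑ c : Fin a → Bool,
        (if ∀ i ∈ s, extB c i = true then ((1:ℝ≥0∞)/2)^a else 0) := by
      rw [measure_eq_sum_dyadicCell ν a T hTmeas]
      exact Finset.sum_congr rfl fun c _ => (key c).2
    have hhalf : ν (indepSet ν a ∩ T) = ((1:ℝ≥0∞)/2) * ν T := by
      rw [hsum1, hsum2, Finset.mul_sum]
      refine Finset.sum_congr rfl fun c _ => ?_
      by_cases h : ∀ i ∈ s, extB c i = true
      · rw [if_pos h, if_pos h, pow_succ]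
        ring
      · rw [if_neg h, if_neg h, mul_zero]
    rw [Finset.set_biInter_insert, ← hTdef, hhalf, ih,
      Finset.card_insert_of_notMem haS, pow_succ]
    ring

theorem exists_indep_family :
    ∃ E : ℕ → Set Y, (∀ i, MeasurableSet (E i)) ∧
      ∀ s : Finset ℕ, ν (⋂ i ∈ s, E i) = ((1:ℝ≥0∞)/2) ^ s.card :=
  ⟨indepSet ν, measurableSet_indepSet ν, measure_biInter_indepSet ν⟩

end Dyadic2

/-! ### Encoding the reals and the main theorem -/

noncomputable def encR (t : ℝ) (n : ℕ) : ℕ := Encodable.encode (⌊t * 2 ^ n⌋)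

theorem encR_ne_eventually {t t' : ℝ} (h : t < t') :
    ∀ᶠ n in Filter.atTop, encR t n ≠ encR t' n := by
  obtain ⟨N, hN⟩ := pow_unbounded_of_one_lt (1 / (t' - t)) (one_lt_two (α := ℝ))
  refine Filter.eventually_atTop.mpr ⟨N, fun n hn => ?_⟩
  have hpos : (0:ℝ) < t' - t := sub_pos.mpr h
  have h2 : (1 : ℝ) / (t' - t) < 2 ^ n :=
    lt_of_lt_of_le hN (pow_le_pow_right₀ one_le_two hn)
  have h2pow : (0:ℝ) < 2 ^ n := by positivity
  have h3 : (1:ℝ) < (t' - t) * 2 ^ n := by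
    rw [div_lt_iff₀ hpos] at h2
    linarith
  have h4 : t * 2 ^ n + 1 ≤ t' * 2 ^ n := by nlinarith
  have h5 : ⌊t * 2 ^ n⌋ < ⌊t' * 2 ^ n⌋ := by
    have h6 := Int.floor_le_floor h4
    rw [Int.floor_add_one] at h6
    omega
  intro hc
  have h7 := Encodable.encode_injective hc
  omega


/-- If the `(X n, μ n)` are atomless standard Borel probability spaces,
then the Loeb space carries a continuum-indexed family of mutually independent
measurable sets of measure `1/2`: for any finitely many distinct indices
`t₁, …, t_m` the measure of `B t₁ ∩ … ∩ B t_m` is `2⁻ᵐ`. -/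
theorem loeb_independent_family (u : Ultrafilter ℕ) (hu : (u : Filter ℕ) ≤ Filter.cofinite)
    {X : ℕ → Type*} [∀ n, MeasurableSpace (X n)] [∀ n, StandardBorelSpace (X n)]
    (μ : ∀ n, Measure (X n)) [∀ n, IsProbabilityMeasure (μ n)] [∀ n, NullSingletonClass (μ n)] :
    ∃ B : ℝ → Set (UProd u X),
      (∀ t : ℝ, LoebMeasurable u μ (B t)) ∧
      ∀ s : Finset ℝ, s.Nonempty →
        loebOuter u μ (⋂ t ∈ s, B t) = (1 / 2 : ℝ≥0∞) ^ s.card := by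
  classical
  choose E hEmeas hEind using fun n => exists_indep_family (μ n)
  refine ⟨fun t => uSet u (fun n => E n (encR t n)), ?_, ?_⟩
  · intro t
    exact loebMeasurable_uSet u μ (fun n => hEmeas n _)
  · intro s hs
    rw [uSet_biInter s hs]
    have hAmeas : ∀ n, MeasurableSet (⋂ t ∈ s, E n (encR t n)) := fun n =>
      MeasurableSet.biInter (s.countable_toSet) fun t _ => hEmeas n _
    rw [loebOuter_uSet u μ hu hAmeas]
    have hinj : ∀ᶠ n in (u : Filter ℕ),
        ∀ t ∈ s, ∀ t' ∈ s, t ≠ t' → encR t n ≠ encR t' n := by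
      rw [Filter.eventually_all_finset]
      intro t ht
      rw [Filter.eventually_all_finset]
      intro t' ht'
      by_cases h : t = t'
      · exact Filter.Eventually.of_forall fun n hne => absurd h hne
      · have hcof : ∀ᶠ n in Filter.atTop, encR t n ≠ encR t' n := by
          rcases lt_or_gt_of_ne h with hlt | hlt
          · exact encR_ne_eventually hlt
          · exact (encR_ne_eventually hlt).mono fun n hn => hn.symm
        have hev : ∀ᶠ n in (u : Filter ℕ), encR t n ≠ encR t' n :=
          Filter.Eventually.filter_mono hu (by rwa [Nat.cofinite_eq_atTop])
        exact hev.mono fun n hn _ => hn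
    have hval : ∀ᶠ n in (u : Filter ℕ),
        μ n (⋂ t ∈ s, E n (encR t n)) = ((1:ℝ≥0∞)/2) ^ s.card := by
      refine hinj.mono fun n hn => ?_
      have hrw : (⋂ t ∈ s, E n (encR t n)) = ⋂ i ∈ s.image (fun t => encR t n), E n i := by
        rw [Finset.set_biInter_finset_image]
      have hinjOn : Set.InjOn (fun t => encR t n) ↑s := by
        intro t ht t' ht' he
        by_contra hne
        exact hn t (Finset.mem_coe.mp ht) t' (Finset.mem_coe.mp ht') hne he
      rw [hrw, hEind n, Finset.card_image_of_injOn hinjOn]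
    calc ulim u (fun n => μ n (⋂ t ∈ s, E n (encR t n)))
        = ulim u (fun _ => ((1:ℝ≥0∞)/2) ^ s.card) := ulim_congr hval
      _ = (1 / 2 : ℝ≥0∞) ^ s.card := ulim_const
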